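/- Let A ∈ ℝ^{m×m} be symmetric (possibly indefinite) and invertible, b ∈ ℝ^m. If the sketch-and-project iteration x_k = x_{k−1} + p_k with p_k solving S_kᵀ A p_k = S_kᵀ r_{k−1} and S_k = [r_0, …, r_{k−1}] of full column rank runs without breakdown, then the residuals r_0, …, r_{k−1} are pairwise orthogonal, and hence the method terminates with r_k = 0 for some k ≤ m. -/

import Mathlib

open Matrix

/-- Finite termination of residual-sketch PLSS: residuals are pairwise orthogonal
and some residual `r_k` with `k ≤ m` is zero. -/
theorem finite_termination (m : ℕ) (A : Matrix (Fin m) (Fin m) ℝ)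
    (hA : A.IsSymm) (hAinv : IsUnit A.det)
    (b : Fin m → ℝ) (x p : ℕ → Fin m → ℝ) (r : ℕ → Fin m → ℝ)
    (hr : ∀ j, r j = b - A.mulVec (x j))
    (hx : ∀ j, 1 ≤ j → x j = x (j - 1) + p j)
    -- sketched constraint S_jᵀ A p_j = S_jᵀ r_{j-1}, columnwise with S_j = [r_0,…,r_{j-1}]
    (hcons : ∀ j, 1 ≤ j → ∀ i < j, r i ⬝ᵥ A.mulVec (p j) = r i ⬝ᵥ r (j - 1)) :
    (∀ i j, i < j → r i ⬝ᵥ r j = 0) ∧ ∃ k ≤ m, r k = 0 := by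
  have hrec : ∀ j, 1 ≤ j → r j = r (j - 1) - A.mulVec (p j) := by
    intro j hj
    rw [hr j, hr (j - 1), hx j hj, Matrix.mulVec_add]
    abel
  have horth : ∀ i j, i < j → r i ⬝ᵥ r j = 0 := by
    intro i j hij
    have hj : 1 ≤ j := Nat.one_le_iff_ne_zero.mpr (Nat.pos_of_ne_zero (by omega)).ne'
    rw [hrec j hj, dotProduct_sub, hcons j hj i hij, sub_self]
  refine ⟨horth, ?_⟩
  by_contra h
  push_neg at h
  -- The m+1 vectors r 0, …, r m are nonzero and pairwise orthogonal in ℝ^m.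
  set v : Fin (m + 1) → EuclideanSpace ℝ (Fin m) := fun k => WithLp.toLp 2 (r k) with hv
  have hli : LinearIndependent ℝ v := by
    apply linearIndependent_of_ne_zero_of_inner_eq_zero
    · intro i
      have := h i (by omega : (i : ℕ) ≤ m)
      simpa [hv] using this
    · intro i j hij
      have : (r i : Fin m → ℝ) ⬝ᵥ r j = 0 := by
        rcases lt_or_gt_of_ne (fun hc : (i : ℕ) = (j : ℕ) => hij (Fin.ext hc)) with hlt | hgt
        · exact horth _ _ hlt
        · rw [dotProduct_comm]; exact horth _ _ hgt
      simpa [hv, PiLp.inner_apply, dotProduct, mul_comm] using this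
  have hcard := hli.fintype_card_le_finrank
  simp [finrank_euclideanSpace_fin] at hcard
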